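/- In the algebra U with K = f_{q^{1/2}}, the elements H = (2(q^{-1}−q)/(q⁴+1))·(FK²E + q⁵(K⁴−1)/(q²−1)²), X = q^{-1/2}FK, Y = q^{-1/2}KE satisfy q^{-2}XY − q²YX = ((q²+q^{-2})/2) H. -/

import Mathlib

private lemma stmt15_aux1 (q : ℂ) (hq0 : q ≠ 0) (h21 : q ^ 2 - 1 ≠ 0) (h41 : q ^ 4 + 1 ≠ 0) :
    -(q ^ 2 * (-1 + q ^ 2)⁻¹) =
    q ^ 5 * (q ^ 3 * 2 - q ^ 5 * 4 + (q ^ 7 * 4 - q ^ 9 * 4) + q ^ 11 * 2)⁻¹ * 2 -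
        q ^ 7 * (q ^ 3 * 2 - q ^ 5 * 4 + (q ^ 7 * 4 - q ^ 9 * 4) + q ^ 11 * 2)⁻¹ * 2 +
      (q ^ 9 * (q ^ 3 * 2 - q ^ 5 * 4 + (q ^ 7 * 4 - q ^ 9 * 4) + q ^ 11 * 2)⁻¹ * 2 -
        q ^ 11 * (q ^ 3 * 2 - q ^ 5 * 4 + (q ^ 7 * 4 - q ^ 9 * 4) + q ^ 11 * 2)⁻¹ * 2) := by
  have hA : -1 + q ^ 2 ≠ 0 := by
    intro h; apply h21; linear_combination h
  have hB : q ^ 3 * 2 - q ^ 5 * 4 + (q ^ 7 * 4 - q ^ 9 * 4) + q ^ 11 * 2 ≠ 0 := by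
    have h : q ^ 3 * 2 - q ^ 5 * 4 + (q ^ 7 * 4 - q ^ 9 * 4) + q ^ 11 * 2
        = 2 * q ^ 3 * ((q ^ 2 - 1) ^ 2 * (q ^ 4 + 1)) := by ring
    rw [h]
    exact mul_ne_zero (mul_ne_zero two_ne_zero (pow_ne_zero 3 hq0))
      (mul_ne_zero (pow_ne_zero 2 h21) h41)
  rw [show q ^ 3 * 2 - q ^ 5 * 4 + (q ^ 7 * 4 - q ^ 9 * 4) + q ^ 11 * 2
      = 2 * q ^ 3 * ((q ^ 2 - 1) ^ 2 * (q ^ 4 + 1)) by ring]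
  field_simp
  ring

private lemma stmt15_aux2 (q : ℂ) (hq0 : q ≠ 0) (h21 : q ^ 2 - 1 ≠ 0) (h41 : q ^ 4 + 1 ≠ 0) :
    q ^ 3 * (-q + q ^ 3)⁻¹ =
    -(q ^ 5 * (q ^ 3 * 2 - q ^ 5 * 4 + (q ^ 7 * 4 - q ^ 9 * 4) + q ^ 11 * 2)⁻¹ * 2) +
        (q ^ 7 * (q ^ 3 * 2 - q ^ 5 * 4 + (q ^ 7 * 4 - q ^ 9 * 4) + q ^ 11 * 2)⁻¹ * 2 -
          q ^ 9 * (q ^ 3 * 2 - q ^ 5 * 4 + (q ^ 7 * 4 - q ^ 9 * 4) + q ^ 11 * 2)⁻¹ * 2) +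
      q ^ 11 * (q ^ 3 * 2 - q ^ 5 * 4 + (q ^ 7 * 4 - q ^ 9 * 4) + q ^ 11 * 2)⁻¹ * 2 := by
  have hA : -q + q ^ 3 ≠ 0 := by
    have h : -q + q ^ 3 = q * (q ^ 2 - 1) := by ring
    rw [h]; exact mul_ne_zero hq0 h21
  have hB : q ^ 3 * 2 - q ^ 5 * 4 + (q ^ 7 * 4 - q ^ 9 * 4) + q ^ 11 * 2 ≠ 0 := by
    have h : q ^ 3 * 2 - q ^ 5 * 4 + (q ^ 7 * 4 - q ^ 9 * 4) + q ^ 11 * 2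
        = 2 * q ^ 3 * ((q ^ 2 - 1) ^ 2 * (q ^ 4 + 1)) := by ring
    rw [h]
    exact mul_ne_zero (mul_ne_zero two_ne_zero (pow_ne_zero 3 hq0))
      (mul_ne_zero (pow_ne_zero 2 h21) h41)
  have hA2 : -1 + q ^ 2 ≠ 0 := by
    intro h; apply h21; linear_combination h
  rw [show q ^ 3 * 2 - q ^ 5 * 4 + (q ^ 7 * 4 - q ^ 9 * 4) + q ^ 11 * 2
      = 2 * q ^ 3 * ((q ^ 2 - 1) ^ 2 * (q ^ 4 + 1)) by ring]
  field_simp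
  ring

/-- In `U` with `K' = K⁻¹`, the elements
`H = (2(q⁻¹−q)/(q⁴+1))(FK²E + q⁵(K⁴−1)/(q²−1)²)`, `X = q^{−1/2}FK`, `Y = q^{−1/2}KE`
satisfy `q⁻²XY − q²YX = ((q²+q⁻²)/2)H` (calculus 1). -/
theorem stmt15 {A : Type*} [Ring A] [Algebra ℂ A]
    (q s : ℂ) (hs : s ^ 2 = q) (hq0 : q ≠ 0)
    (hroot : ∀ n : ℕ, 0 < n → q ^ n ≠ 1) (hq4 : q ^ 4 ≠ -1)
    (E F K K' : A)
    (hKK' : K * K' = 1) (hK'K : K' * K = 1)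
    (hKE : K * E = q • (E * K)) (hKF : K * F = q⁻¹ • (F * K))
    (hEF : E * F - F * E = (q - q⁻¹)⁻¹ • (K ^ 2 - K' ^ 2)) :
    let H := (2 * (q⁻¹ - q) * (q ^ 4 + 1)⁻¹) •
      (F * K ^ 2 * E + (q ^ 5 * ((q ^ 2 - 1) ^ 2)⁻¹) • (K ^ 4 - 1))
    let X := s⁻¹ • (F * K)
    let Y := s⁻¹ • (K * E)
    (q ^ 2)⁻¹ • (X * Y) - (q ^ 2) • (Y * X) = ((q ^ 2 + (q ^ 2)⁻¹) / 2) • H := by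
  intro H X Y
  have hs0 : s ≠ 0 := by
    intro h; apply hq0; rw [← hs, h]; ring
  have hq1 : q ^ 2 ≠ 1 := hroot 2 (by norm_num)
  have h21 : q ^ 2 - 1 ≠ 0 := sub_ne_zero.mpr hq1
  have h41 : q ^ 4 + 1 ≠ 0 := fun h => hq4 (by linear_combination h)
  have hqq : q - q⁻¹ ≠ 0 := by
    intro h
    apply h21
    have := mul_eq_zero_of_right q h
    field_simp at this
    linear_combination this
  have hEK : E * K = q⁻¹ • (K * E) := by
    rw [hKE, smul_smul, inv_mul_cancel₀ hq0, one_smul]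
  have L1 : F * K * (K * E) = F * K ^ 2 * E := by
    rw [sq]; noncomm_ring
  have hEFeq : E * F = (q - q⁻¹)⁻¹ • (K ^ 2 - K' ^ 2) + F * E :=
    sub_eq_iff_eq_add.mp hEF
  have hc : K * (K ^ 2 - K' ^ 2) * K = K ^ 4 - 1 := by
    have h1 : K * K' ^ 2 * K = 1 := by
      have : K * K' ^ 2 * K = (K * K') * (K' * K) := by rw [sq]; noncomm_ring
      rw [this, hKK', hK'K, mul_one]
    have h2 : K * K ^ 2 * K = K ^ 4 := by
      rw [show (4:ℕ) = 1 + 2 + 1 from rfl, pow_add, pow_add, pow_one]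
    rw [mul_sub, sub_mul, h1, h2]
  have hd : K * (F * E) * K = (q ^ 2)⁻¹ • (F * K ^ 2 * E) := by
    have h3 : K * (F * E) * K = (K * F) * (E * K) := by noncomm_ring
    rw [h3, hKF, hEK, smul_mul_assoc, mul_smul_comm, smul_smul, L1]
    congr 1
    rw [sq, mul_inv]
  have L2 : K * E * (F * K) = (q ^ 2)⁻¹ • (F * K ^ 2 * E)
      + ((q - q⁻¹)⁻¹) • (K ^ 4 - 1) := by
    have h4 : K * E * (F * K) = K * (E * F) * K := by noncomm_ring
    rw [h4, hEFeq, mul_add, add_mul, hd, mul_smul_comm, smul_mul_assoc, hc]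
    abel
  show (q ^ 2)⁻¹ • ((s⁻¹ • (F * K)) * (s⁻¹ • (K * E)))
      - (q ^ 2) • ((s⁻¹ • (K * E)) * (s⁻¹ • (F * K)))
      = ((q ^ 2 + (q ^ 2)⁻¹) / 2) • ((2 * (q⁻¹ - q) * (q ^ 4 + 1)⁻¹) •
        (F * K ^ 2 * E + (q ^ 5 * ((q ^ 2 - 1) ^ 2)⁻¹) • (K ^ 4 - 1)))
  have hss : s⁻¹ * s⁻¹ = q⁻¹ := by rw [← hs, sq, mul_inv]
  rw [smul_mul_assoc, smul_mul_assoc, mul_smul_comm, mul_smul_comm, L1, L2]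
  simp only [smul_smul, mul_assoc]
  rw [hss]
  match_scalars
  all_goals field_simp
  all_goals try ring
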